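/- The infected-population stays nonnegative: if x₃' = -η x₃ + ρ x₂ (P - x₃) with η, ρ ≥ 0, x₂ continuous and nonnegative, 0 ≤ x₃(0) ≤ P, then x₃(t) ≥ 0 for all t ≥ 0. -/

import Mathlib

/-- The infected population stays nonnegative. -/
theorem infected_nonneg
    (η ρ P : ℝ) (x₂ x₃ : ℝ → ℝ)
    (hη : 0 ≤ η) (hρ : 0 ≤ ρ)
    (hx₂c : Continuous x₂) (hx₂ : ∀ t, 0 ≤ x₂ t)
    (h0 : 0 ≤ x₃ 0) (h0P : x₃ 0 ≤ P)
    (hder : ∀ t, 0 ≤ t → HasDerivAt x₃ (-η * x₃ t + ρ * x₂ t * (P - x₃ t)) t) :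
    ∀ t, 0 ≤ t → 0 ≤ x₃ t := by
  have hP : 0 ≤ P := h0.trans h0P
  set f : ℝ → ℝ := fun t => η + ρ * x₂ t with hf
  have hfc : Continuous f := continuous_const.add (continuous_const.mul hx₂c)
  set g : ℝ → ℝ := fun t => ∫ s in (0:ℝ)..t, f s with hg
  have hgd : ∀ t : ℝ, HasDerivAt g (f t) t := by
    intro t
    exact intervalIntegral.integral_hasDerivAt_right (hfc.intervalIntegrable 0 t)
      (hfc.stronglyMeasurableAtFilter _ _) hfc.continuousAt
  set y : ℝ → ℝ := fun t => x₃ t * Real.exp (g t) with hy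
  have hyd : ∀ t : ℝ, 0 ≤ t →
      HasDerivAt y (Real.exp (g t) * (ρ * x₂ t * P)) t := by
    intro t ht
    have h1 := (hder t ht).mul ((hgd t).exp)
    rw [show Real.exp (g t) * (ρ * x₂ t * P) = (-η * x₃ t + ρ * x₂ t * (P - x₃ t)) * Real.exp (g t) + x₃ t * (Real.exp (g t) * f t) by simp only [hf]; ring]
    exact h1
  have hycont : ContinuousOn y (Set.Ici 0) := fun t ht =>
    ((hyd t ht).continuousAt).continuousWithinAt
  have hmono : MonotoneOn y (Set.Ici (0:ℝ)) := by
    apply monotoneOn_of_deriv_nonneg (convex_Ici 0) hycont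
    · intro t ht
      rw [interior_Ici] at ht
      exact (hyd t (le_of_lt ht)).differentiableAt.differentiableWithinAt
    · intro t ht
      rw [interior_Ici] at ht
      rw [(hyd t (le_of_lt ht)).deriv]
      have := hx₂ t
      positivity
  intro t ht
  have h1 : y 0 ≤ y t := hmono (Set.self_mem_Ici) ht ht
  have h2 : 0 ≤ y 0 := by
    simp only [hy]
    positivity
  have h3 : 0 ≤ x₃ t * Real.exp (g t) := h2.trans h1
  have := Real.exp_pos (g t)
  nlinarith
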